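/- Let A be a real symmetric positive definite n×n matrix and Z a real n×m matrix with injective associated linear map, so that E = Zᵀ A Z is invertible, and let Q = Z E⁻¹ Zᵀ. Then for every b ∈ ℝⁿ, the vector Q b is the unique vector u lying in the column space of Z (the range of Z.mulVecLin) satisfying Zᵀ (b − A ⬝ᵥ u) = 0. -/

import Mathlib

open Matrix

theorem coarse_correction_unique_galerkin (n m : ℕ)
    (A : Matrix (Fin n) (Fin n) ℝ) (hA : A.PosDef)
    (Z : Matrix (Fin n) (Fin m) ℝ) (hZ : Function.Injective Z.mulVecLin) :
    ∀ b : Fin n → ℝ,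
      (Z * (Zᵀ * A * Z)⁻¹ * Zᵀ) *ᵥ b ∈ LinearMap.range Z.mulVecLin ∧
      Zᵀ *ᵥ (b - A *ᵥ ((Z * (Zᵀ * A * Z)⁻¹ * Zᵀ) *ᵥ b)) = 0 ∧
      ∀ u : Fin n → ℝ, u ∈ LinearMap.range Z.mulVecLin →
        Zᵀ *ᵥ (b - A *ᵥ u) = 0 → u = (Z * (Zᵀ * A * Z)⁻¹ * Zᵀ) *ᵥ b := by
  have hE : (Zᵀ * A * Z).PosDef := by
    refine Matrix.PosDef.of_dotProduct_mulVec_pos ?_ ?_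
    · rw [← conjTranspose_eq_transpose_of_trivial Z]
      exact isHermitian_conjTranspose_mul_mul Z hA.1
    · intro x hx
      have hzx : Z *ᵥ x ≠ 0 := by
        intro h
        exact hx (hZ (by simpa [Matrix.mulVecLin_apply] using h))
      have key : x ⬝ᵥ ((Zᵀ * A * Z) *ᵥ x) = (Z *ᵥ x) ⬝ᵥ (A *ᵥ (Z *ᵥ x)) := by
        rw [← Matrix.mulVec_mulVec, ← Matrix.mulVec_mulVec, dotProduct_mulVec,
          vecMul_transpose]
      have := hA.dotProduct_mulVec_pos hzx
      simp only [star_trivial] at this ⊢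
      rw [key]
      simpa using this
  have hdet : IsUnit (Zᵀ * A * Z).det := isUnit_iff_isUnit_det _ |>.1 hE.isUnit
  have hEinv : (Zᵀ * A * Z) * (Zᵀ * A * Z)⁻¹ = 1 := mul_nonsing_inv _ hdet
  have hinvE : (Zᵀ * A * Z)⁻¹ * (Zᵀ * A * Z) = 1 := nonsing_inv_mul _ hdet
  intro b
  have hmat : Zᵀ * A * (Z * (Zᵀ * A * Z)⁻¹ * Zᵀ) = Zᵀ := by
    rw [show Zᵀ * A * (Z * (Zᵀ * A * Z)⁻¹ * Zᵀ)
        = ((Zᵀ * A * Z) * (Zᵀ * A * Z)⁻¹) * Zᵀ by simp only [Matrix.mul_assoc],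
      hEinv, Matrix.one_mul]
  refine ⟨⟨((Zᵀ * A * Z)⁻¹ * Zᵀ) *ᵥ b, ?_⟩, ?_, ?_⟩
  · simp [Matrix.mulVecLin_apply, Matrix.mulVec_mulVec, Matrix.mul_assoc]
  · rw [Matrix.mulVec_sub, sub_eq_zero, Matrix.mulVec_mulVec, Matrix.mulVec_mulVec, hmat]
  · rintro u ⟨c, rfl⟩ hc
    simp only [Matrix.mulVecLin_apply] at hc ⊢
    rw [Matrix.mulVec_sub, sub_eq_zero, Matrix.mulVec_mulVec, Matrix.mulVec_mulVec] at hc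
    have hstep : (Z * (Zᵀ * A * Z)⁻¹ * Zᵀ) *ᵥ b
        = Z *ᵥ ((Zᵀ * A * Z)⁻¹ *ᵥ (Zᵀ *ᵥ b)) := by
      simp [Matrix.mulVec_mulVec, Matrix.mul_assoc]
    rw [hstep, hc, Matrix.mulVec_mulVec, Matrix.mulVec_mulVec, Matrix.mul_assoc,
      hinvE, Matrix.mul_one]
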